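/- Let $N \ge 1$, $\mathcal{I} = \mathbb{Z}/N\mathbb{Z}$, let $(\sigma_j)_{j\in\mathcal{I}}$ be non-negative with $\sigma_j = \sigma_{-j}$, and let $(u_i)_{i\in\mathcal{I}}$ be positive reals. Then $\sum_{j\in\mathcal{I}} \sigma_j \sum_{i\in\mathcal{I}} (u_{i+1}u_{i+1-j} - u_i u_{i-j})(\log u_{i+1} - \log u_i) = \frac12 \sum_{j\in\mathcal{I}} \sigma_j \sum_{i\in\mathcal{I}} (u_{i+1}u_{i+1-j} - u_i u_{i-j})(\log(u_{i+1}u_{i+1-j}) - \log(u_i u_{i-j}))$, and consequently this quantity is bounded below by $2\sum_{j\in\mathcal{I}} \sigma_j \sum_{i\in\mathcal{I}} (\sqrt{u_{i+1}u_{i+1-j}} - \sqrt{u_i u_{i-j}})^2$. -/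

import Mathlib

lemma log_mean_aux : ∀ s : ℝ, 1 ≤ s → 2 * (s - 1) ≤ (s + 1) * Real.log s := by
  intro s hs
  set g : ℝ → ℝ := fun t => (t + 1) * Real.log t - 2 * (t - 1) with hg
  have hderiv : ∀ t : ℝ, 0 < t → HasDerivAt g (Real.log t + (t + 1) * t⁻¹ - 2) t := by
    intro t ht
    have h1 : HasDerivAt (fun t : ℝ => (t + 1) * Real.log t)
        (1 * Real.log t + (t + 1) * t⁻¹) t :=
      (((hasDerivAt_id t).add_const 1).mul (Real.hasDerivAt_log ht.ne'))
    have h2 : HasDerivAt (fun t : ℝ => 2 * (t - 1)) 2 t := by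
      simpa using ((hasDerivAt_id t).sub_const 1).const_mul 2
    have h3 := h1.sub h2
    rw [one_mul] at h3
    exact h3
  have hmono : MonotoneOn g (Set.Ici (1:ℝ)) := by
    apply monotoneOn_of_deriv_nonneg (convex_Ici 1)
    · apply ContinuousOn.sub
      · exact (continuousOn_id.add continuousOn_const).mul
          (Real.continuousOn_log.mono (by intro x hx; simp at hx ⊢; linarith))
      · exact (continuousOn_const.mul (continuousOn_id.sub continuousOn_const))
    · intro t ht
      rw [interior_Ici] at ht
      exact (hderiv t (by linarith [Set.mem_Ioi.mp ht])).differentiableAt.differentiableWithinAt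
    · intro t ht
      rw [interior_Ici] at ht
      have ht1 : (1:ℝ) < t := ht
      have ht0 : (0:ℝ) < t := by linarith
      rw [(hderiv t ht0).deriv]
      have hlog : 1 - t⁻¹ ≤ Real.log t := by
        have := Real.log_le_sub_one_of_pos (x := t⁻¹) (by positivity)
        rw [Real.log_inv] at this
        linarith
      have h3 : (t + 1) * t⁻¹ = 1 + t⁻¹ := by field_simp
      rw [h3]
      linarith
  have h1 : g 1 ≤ g s := hmono (by simp) (by simpa using hs) hs
  simp only [hg, Real.log_one] at h1
  linarith

lemma log_ineq_le (a b : ℝ) (ha : 0 < a) (hb : 0 < b) (hba : b ≤ a) :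
    4 * (Real.sqrt a - Real.sqrt b) ^ 2 ≤ (a - b) * (Real.log a - Real.log b) := by
  set x := Real.sqrt a
  set y := Real.sqrt b
  have hx : 0 < x := Real.sqrt_pos.mpr ha
  have hy : 0 < y := Real.sqrt_pos.mpr hb
  have hxy : y ≤ x := Real.sqrt_le_sqrt hba
  have ha' : a = x ^ 2 := (Real.sq_sqrt ha.le).symm
  have hb' : b = y ^ 2 := (Real.sq_sqrt hb.le).symm
  have hs : 1 ≤ x / y := (one_le_div hy).mpr hxy
  have key := log_mean_aux (x / y) hs
  have hlog : Real.log a - Real.log b = 2 * Real.log (x / y) := by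
    rw [ha', hb', Real.log_pow, Real.log_pow, Real.log_div hx.ne' hy.ne']
    push_cast; ring
  rw [hlog, ha', hb']
  have key' : 2 * (x - y) ≤ (x + y) * Real.log (x / y) := by
    have h := mul_le_mul_of_nonneg_right key hy.le
    have e1 : 2 * (x / y - 1) * y = 2 * (x - y) := by field_simp
    have e2 : (x / y + 1) * Real.log (x / y) * y = (x + y) * Real.log (x / y) := by
      field_simp
    rw [e1, e2] at h
    exact h
  have h2xy : (0:ℝ) ≤ 2 * (x - y) := by linarith
  nlinarith [mul_le_mul_of_nonneg_left key' h2xy]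

lemma log_ineq (a b : ℝ) (ha : 0 < a) (hb : 0 < b) :
    4 * (Real.sqrt a - Real.sqrt b) ^ 2 ≤ (a - b) * (Real.log a - Real.log b) := by
  rcases le_total b a with hba | hab
  · exact log_ineq_le a b ha hb hba
  · have := log_ineq_le b a hb ha hab
    nlinarith [this]

/-- Symmetrization identity and lower bound for the self-diffusion term in the discrete
entropy dissipation estimate. -/
theorem self_diffusion_symmetrization (N : ℕ) [NeZero N]
    (σ : ZMod N → ℝ) (hσ : ∀ j, 0 ≤ σ j) (hσsym : ∀ j, σ j = σ (-j))
    (u : ZMod N → ℝ) (hu : ∀ i, 0 < u i) :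
    (∑ j : ZMod N, σ j * ∑ i : ZMod N,
        (u (i + 1) * u (i + 1 - j) - u i * u (i - j)) * (Real.log (u (i + 1)) - Real.log (u i))
      = (1 / 2) * ∑ j : ZMod N, σ j * ∑ i : ZMod N,
          (u (i + 1) * u (i + 1 - j) - u i * u (i - j)) *
            (Real.log (u (i + 1) * u (i + 1 - j)) - Real.log (u i * u (i - j)))) ∧
    2 * ∑ j : ZMod N, σ j * ∑ i : ZMod N,
        (Real.sqrt (u (i + 1) * u (i + 1 - j)) - Real.sqrt (u i * u (i - j))) ^ 2
      ≤ ∑ j : ZMod N, σ j * ∑ i : ZMod N,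
          (u (i + 1) * u (i + 1 - j) - u i * u (i - j)) *
            (Real.log (u (i + 1)) - Real.log (u i)) := by
  have hswap : (∑ j : ZMod N, σ j * ∑ i : ZMod N,
      (u (i + 1) * u (i + 1 - j) - u i * u (i - j)) *
        (Real.log (u (i + 1 - j)) - Real.log (u (i - j))))
      = ∑ j : ZMod N, σ j * ∑ i : ZMod N,
      (u (i + 1) * u (i + 1 - j) - u i * u (i - j)) *
        (Real.log (u (i + 1)) - Real.log (u i)) := by
    refine Fintype.sum_equiv (Equiv.neg (ZMod N)) _ _ (fun j => ?_)
    simp only [Equiv.neg_apply]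
    rw [← hσsym j]
    congr 1
    refine Fintype.sum_equiv (Equiv.subRight j) _ _ (fun i => ?_)
    simp only [Equiv.subRight_apply]
    have e1 : i - j + 1 - -j = i + 1 := by ring
    have e2 : i - j - -j = i := by ring
    have e3 : i - j + 1 = i + 1 - j := by ring
    rw [e1, e2, e3]
    ring
  have hsplit : (∑ j : ZMod N, σ j * ∑ i : ZMod N,
      (u (i + 1) * u (i + 1 - j) - u i * u (i - j)) *
        (Real.log (u (i + 1) * u (i + 1 - j)) - Real.log (u i * u (i - j))))
      = (∑ j : ZMod N, σ j * ∑ i : ZMod N,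
          (u (i + 1) * u (i + 1 - j) - u i * u (i - j)) *
            (Real.log (u (i + 1)) - Real.log (u i)))
        + (∑ j : ZMod N, σ j * ∑ i : ZMod N,
          (u (i + 1) * u (i + 1 - j) - u i * u (i - j)) *
            (Real.log (u (i + 1 - j)) - Real.log (u (i - j)))) := by
    rw [← Finset.sum_add_distrib]
    refine Finset.sum_congr rfl fun j _ => ?_
    rw [← mul_add, ← Finset.sum_add_distrib]
    congr 1
    refine Finset.sum_congr rfl fun i _ => ?_
    rw [Real.log_mul (hu _).ne' (hu _).ne', Real.log_mul (hu _).ne' (hu _).ne']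
    ring
  have hid : (∑ j : ZMod N, σ j * ∑ i : ZMod N,
      (u (i + 1) * u (i + 1 - j) - u i * u (i - j)) * (Real.log (u (i + 1)) - Real.log (u i)))
      = (1 / 2) * ∑ j : ZMod N, σ j * ∑ i : ZMod N,
          (u (i + 1) * u (i + 1 - j) - u i * u (i - j)) *
            (Real.log (u (i + 1) * u (i + 1 - j)) - Real.log (u i * u (i - j))) := by
    rw [hsplit, hswap]
    ring
  refine ⟨hid, ?_⟩
  rw [hid]
  rw [Finset.mul_sum, Finset.mul_sum]
  refine Finset.sum_le_sum fun j _ => ?_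
  have h4 : 4 * (∑ i : ZMod N,
      (Real.sqrt (u (i + 1) * u (i + 1 - j)) - Real.sqrt (u i * u (i - j))) ^ 2)
      ≤ ∑ i : ZMod N, (u (i + 1) * u (i + 1 - j) - u i * u (i - j)) *
          (Real.log (u (i + 1) * u (i + 1 - j)) - Real.log (u i * u (i - j))) := by
    rw [Finset.mul_sum]
    refine Finset.sum_le_sum fun i _ => ?_
    exact log_ineq _ _ (mul_pos (hu _) (hu _)) (mul_pos (hu _) (hu _))
  nlinarith [mul_le_mul_of_nonneg_left h4 (hσ j)]
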